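/- If 0 < h < 1/(s·c·c₃), then for every t ∈ ℝ, every Z ∈ ℝ^d, all real numbers ξ_{r,k} (r, k = 1, …, m) with S := ∑_{r,k=1}^{m} |ξ_{r,k}|, every family of drift stage values H⁽⁰⁾₁, …, H⁽⁰⁾_s with data (Z, t, h) and the corresponding diffusion stage values H⁽ᵏ⁾_i, one has for every i = 1, …, s: max_{1≤k≤m} ‖H⁽ᵏ⁾_i‖ ≤ ( (‖Z‖ + s·c₃·c·h)/(1 − s·c₃·c·h) + s·c₃·c·S ) · ∑_{j=0}^{i−1} (c₃·c·s)^j · S^j. (Estimate (45) for the diffusion stages of the SRK method.) -/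

import Mathlib

set_option maxHeartbeats 1000000


/-- Estimate (45): bound on the diffusion stages of the SRK method. -/
theorem stmt_16 (s d m : ℕ) (hs : 0 < s) (hd : 0 < d) (hm : 0 < m)
    (c c₃ : ℝ) (hc : 0 < c) (hc₃ : 0 < c₃)
    (a : ℝ → EuclideanSpace ℝ (Fin d) → EuclideanSpace ℝ (Fin d))
    (ha : ∀ t x, ‖a t x‖ ≤ c * (1 + ‖x‖))
    (b : Fin m → ℝ → EuclideanSpace ℝ (Fin d) → EuclideanSpace ℝ (Fin d))
    (hb : ∀ k t x, ‖b k t x‖ ≤ c * (1 + ‖x‖))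
    (A0 A1 B1 : Fin s → Fin s → ℝ)
    (hA0 : ∀ i j, |A0 i j| ≤ c₃) (hA1 : ∀ i j, |A1 i j| ≤ c₃) (hB1 : ∀ i j, |B1 i j| ≤ c₃)
    (hB1tri : ∀ i j, i ≤ j → B1 i j = 0)
    (c0 c1 : Fin s → ℝ) (hc0 : ∀ j, |c0 j| ≤ c₃) (hc1 : ∀ j, |c1 j| ≤ c₃)
    (h : ℝ) (hh : 0 < h) (hh' : h < 1 / ((s : ℝ) * c * c₃))
    (t : ℝ) (Z : EuclideanSpace ℝ (Fin d))
    (ξ : Fin m → Fin m → ℝ)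
    (H0 : Fin s → EuclideanSpace ℝ (Fin d))
    (hH0 : ∀ i, H0 i = Z + h • ∑ j, A0 i j • a (t + c0 j * h) (H0 j))
    (H : Fin m → Fin s → EuclideanSpace ℝ (Fin d))
    (hH : ∀ k i, H k i = Z + h • (∑ j, A1 i j • a (t + c0 j * h) (H0 j))
      + ∑ r, ∑ j ∈ Finset.univ.filter (fun j => j < i),
          (B1 i j * ξ r k) • b r (t + c1 j * h) (H r j)) :
    ∀ i k, ‖H k i‖ ≤
      ((‖Z‖ + (s : ℝ) * c₃ * c * h) / (1 - (s : ℝ) * c₃ * c * h)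
          + (s : ℝ) * c₃ * c * ∑ r, ∑ l, |ξ r l|)
        * ∑ j ∈ Finset.range ((i : ℕ) + 1),
            (c₃ * c * (s : ℝ)) ^ j * (∑ r, ∑ l, |ξ r l|) ^ j := by
  haveI : NeZero s := ⟨hs.ne'⟩
  set S := ∑ r, ∑ l, |ξ r l| with hSdef
  have hS0 : 0 ≤ S := Finset.sum_nonneg fun _ _ => Finset.sum_nonneg fun _ _ => abs_nonneg _
  set θ := (s : ℝ) * c₃ * c * h with hθdef
  have hspos : (0:ℝ) < s := Nat.cast_pos.mpr hs
  have hθpos : 0 < θ := by rw [hθdef]; positivity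
  have hθ1 : θ < 1 := by
    have h1 : h * ((s:ℝ) * c * c₃) < 1 := by
      have := (lt_div_iff₀ (by positivity : (0:ℝ) < (s:ℝ) * c * c₃)).mp hh'
      linarith
    rw [hθdef]; nlinarith
  have h1θ : 0 < 1 - θ := by linarith
  set D := (‖Z‖ + θ) / (1 - θ) with hDdef
  have hDpos : 0 ≤ D := div_nonneg (by positivity) h1θ.le
  have hne : (Finset.univ : Finset (Fin s)).Nonempty := Finset.univ_nonempty
  set M0 := Finset.univ.sup' hne (fun j => ‖H0 j‖) with hM0def
  have hM0nonneg : 0 ≤ M0 := by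
    rw [hM0def]
    exact le_trans (norm_nonneg (H0 ⟨0, hs⟩))
      (Finset.le_sup' (fun j => ‖H0 j‖) (Finset.mem_univ (⟨0, hs⟩ : Fin s)))
  -- generic bound on the deterministic part
  have keyrow : ∀ (row : Fin s → ℝ), (∀ j, |row j| ≤ c₃) →
      ‖Z + h • ∑ j, row j • a (t + c0 j * h) (H0 j)‖ ≤ ‖Z‖ + θ * (1 + M0) := by
    intro row hrow
    have hb1 : ∀ j : Fin s, ‖row j • a (t + c0 j * h) (H0 j)‖ ≤ c₃ * (c * (1 + M0)) := by
      intro j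
      rw [norm_smul, Real.norm_eq_abs]
      have hMj : ‖H0 j‖ ≤ M0 := by
        rw [hM0def]; exact Finset.le_sup' (fun j => ‖H0 j‖) (Finset.mem_univ j)
      have h1 : ‖a (t + c0 j * h) (H0 j)‖ ≤ c * (1 + M0) := by
        refine le_trans (ha _ _) ?_
        nlinarith
      exact mul_le_mul (hrow j) h1 (norm_nonneg _) hc₃.le
    have hsum : ‖∑ j, row j • a (t + c0 j * h) (H0 j)‖ ≤ (s:ℝ) * (c₃ * (c * (1 + M0))) := by
      refine le_trans (norm_sum_le _ _) ?_
      calc ∑ j, ‖row j • a (t + c0 j * h) (H0 j)‖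
          ≤ ∑ _j : Fin s, c₃ * (c * (1 + M0)) := Finset.sum_le_sum fun j _ => hb1 j
        _ = (s:ℝ) * (c₃ * (c * (1 + M0))) := by
            rw [Finset.sum_const, Finset.card_univ, Fintype.card_fin, nsmul_eq_mul]
    calc ‖Z + h • ∑ j, row j • a (t + c0 j * h) (H0 j)‖
        ≤ ‖Z‖ + ‖h • ∑ j, row j • a (t + c0 j * h) (H0 j)‖ := norm_add_le _ _
      _ ≤ ‖Z‖ + h * ((s:ℝ) * (c₃ * (c * (1 + M0)))) := by
          rw [norm_smul, Real.norm_eq_abs, abs_of_pos hh]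
          exact add_le_add le_rfl (mul_le_mul_of_nonneg_left hsum hh.le)
      _ = ‖Z‖ + θ * (1 + M0) := by rw [hθdef]; ring
  have key0 : ∀ i, ‖H0 i‖ ≤ ‖Z‖ + θ * (1 + M0) := by
    intro i
    rw [hH0 i]
    exact keyrow (A0 i) (hA0 i)
  have hDeq : D * (1 - θ) = ‖Z‖ + θ := by rw [hDdef]; field_simp
  have hM0le : M0 ≤ D := by
    obtain ⟨i0, -, hi0⟩ := Finset.exists_mem_eq_sup' hne (fun j => ‖H0 j‖)
    have h1 : M0 = ‖H0 i0‖ := hM0def.trans hi0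
    have h2 : M0 ≤ ‖Z‖ + θ * (1 + M0) := h1 ▸ key0 i0
    nlinarith
  have hZθD : ‖Z‖ + θ * (1 + M0) ≤ D := by
    nlinarith [mul_nonneg hθpos.le (sub_nonneg.mpr hM0le)]
  have hDet : ∀ i : Fin s, ‖Z + h • ∑ j, A1 i j • a (t + c0 j * h) (H0 j)‖ ≤ D :=
    fun i => (keyrow (A1 i) (hA1 i)).trans hZθD
  set K := (s : ℝ) * c₃ * c with hKdef
  have hKpos : 0 < K := by rw [hKdef]; positivity
  set D' := D + K * S with hD'def
  have hD'0 : 0 ≤ D' := by rw [hD'def]; positivity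
  set x := K * S with hxdef
  have hx0 : 0 ≤ x := by rw [hxdef]; positivity
  have hξrow : ∀ k : Fin m, ∑ r, |ξ r k| ≤ S := by
    intro k
    rw [hSdef]
    exact Finset.sum_le_sum fun r _ =>
      Finset.single_le_sum (f := fun l => |ξ r l|) (fun _ _ => abs_nonneg _) (Finset.mem_univ k)
  have main : ∀ n : ℕ, ∀ i : Fin s, (i : ℕ) = n → ∀ k,
      ‖H k i‖ ≤ D' * ∑ j ∈ Finset.range ((i : ℕ) + 1), x ^ j := by
    intro n
    induction n using Nat.strong_induction_on with
    | _ n ih =>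
      intro i hin k
      set P := ∑ l ∈ Finset.range n, x ^ l with hPdef
      have hP0 : 0 ≤ P := Finset.sum_nonneg fun _ _ => pow_nonneg hx0 _
      have hterm : ∀ r : Fin m, ∀ j ∈ Finset.univ.filter (fun j => j < i),
          ‖(B1 i j * ξ r k) • b r (t + c1 j * h) (H r j)‖
            ≤ c₃ * |ξ r k| * (c * (1 + D' * P)) := by
        intro r j hj
        have hji : j < i := (Finset.mem_filter.mp hj).2
        have hjn : (j : ℕ) < n := hin ▸ hji
        have hHrj : ‖H r j‖ ≤ D' * P := by
          refine le_trans (ih _ hjn j rfl r) ?_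
          refine mul_le_mul_of_nonneg_left ?_ hD'0
          exact Finset.sum_le_sum_of_subset_of_nonneg
            (Finset.range_subset_range.mpr hjn) (fun _ _ _ => pow_nonneg hx0 _)
        have hbj : ‖b r (t + c1 j * h) (H r j)‖ ≤ c * (1 + D' * P) := by
          refine le_trans (hb _ _ _) ?_
          nlinarith
        rw [norm_smul, Real.norm_eq_abs, abs_mul]
        refine mul_le_mul (mul_le_mul_of_nonneg_right (hB1 i j) (abs_nonneg _)) hbj
          (norm_nonneg _) (by positivity)
      have hsum2 : ‖∑ r, ∑ j ∈ Finset.univ.filter (fun j => j < i),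
            (B1 i j * ξ r k) • b r (t + c1 j * h) (H r j)‖ ≤ K * S * (1 + D' * P) := by
        refine le_trans (norm_sum_le _ _) ?_
        refine le_trans (Finset.sum_le_sum (fun r _ => norm_sum_le _ _)) ?_
        have hrow : ∀ r : Fin m,
            ∑ j ∈ Finset.univ.filter (fun j => j < i),
                ‖(B1 i j * ξ r k) • b r (t + c1 j * h) (H r j)‖
              ≤ (s:ℝ) * (c₃ * |ξ r k| * (c * (1 + D' * P))) := by
          intro r
          calc ∑ j ∈ Finset.univ.filter (fun j => j < i),
                ‖(B1 i j * ξ r k) • b r (t + c1 j * h) (H r j)‖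
              ≤ ∑ _j ∈ Finset.univ.filter (fun j => j < i),
                  c₃ * |ξ r k| * (c * (1 + D' * P)) := Finset.sum_le_sum (hterm r)
            _ = ((Finset.univ.filter (fun j => j < i)).card : ℝ)
                  * (c₃ * |ξ r k| * (c * (1 + D' * P))) := by
                rw [Finset.sum_const, nsmul_eq_mul]
            _ ≤ (s:ℝ) * (c₃ * |ξ r k| * (c * (1 + D' * P))) := by
                refine mul_le_mul_of_nonneg_right ?_ (by positivity)
                have hcard : (Finset.univ.filter (fun j => j < i)).card ≤ s := by
                  calc (Finset.univ.filter (fun j => j < i)).card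
                      ≤ (Finset.univ : Finset (Fin s)).card := Finset.card_filter_le _ _
                    _ = s := by rw [Finset.card_univ, Fintype.card_fin]
                exact_mod_cast hcard
        calc ∑ r, ∑ j ∈ Finset.univ.filter (fun j => j < i),
              ‖(B1 i j * ξ r k) • b r (t + c1 j * h) (H r j)‖
            ≤ ∑ r, (s:ℝ) * (c₃ * |ξ r k| * (c * (1 + D' * P))) :=
              Finset.sum_le_sum fun r _ => hrow r
          _ = ∑ r, ((s:ℝ) * c₃ * (c * (1 + D' * P))) * |ξ r k| :=
              Finset.sum_congr rfl fun r _ => by ring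
          _ = ((s:ℝ) * c₃ * (c * (1 + D' * P))) * ∑ r, |ξ r k| :=
              (Finset.mul_sum _ _ _).symm
          _ ≤ ((s:ℝ) * c₃ * (c * (1 + D' * P))) * S :=
              mul_le_mul_of_nonneg_left (hξrow k) (by positivity)
          _ = K * S * (1 + D' * P) := by rw [hKdef]; ring
      rw [hin]
      calc ‖H k i‖ = ‖(Z + h • ∑ j, A1 i j • a (t + c0 j * h) (H0 j))
              + ∑ r, ∑ j ∈ Finset.univ.filter (fun j => j < i),
                  (B1 i j * ξ r k) • b r (t + c1 j * h) (H r j)‖ := by rw [hH k i]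
        _ ≤ ‖Z + h • ∑ j, A1 i j • a (t + c0 j * h) (H0 j)‖
              + ‖∑ r, ∑ j ∈ Finset.univ.filter (fun j => j < i),
                  (B1 i j * ξ r k) • b r (t + c1 j * h) (H r j)‖ := norm_add_le _ _
        _ ≤ D + K * S * (1 + D' * P) := add_le_add (hDet i) hsum2
        _ = D' * (x * P + 1) := by rw [hD'def, hxdef]; ring
        _ = D' * ∑ j ∈ Finset.range (n + 1), x ^ j := by rw [geom_sum_succ, hPdef]
  intro i k
  refine le_trans (main (i : ℕ) i rfl k) (le_of_eq ?_)
  congr 1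
  refine Finset.sum_congr rfl fun j _ => ?_
  rw [hxdef, hKdef, ← mul_pow]
  ring
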